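/- Let G be a Garside group of finite type in which some power of Δ is central, and let x ∈ G. There is a unique positive element ρ(x) (possibly trivial) such that: (1) x^{ρ(x)} ∈ SSS(x); and (2) ρ(x) ≼ α for every positive α ∈ G with x^α ∈ SSS(x). -/

import Mathlib

namespace GarsidePaper

/-- A Garside structure of finite type on a group `G`: a positive submonoid `P` with
`P ∩ P⁻¹ = {1}`, a Garside element `Δ ∈ P`, the prefix order `a ≼ b ↔ a⁻¹b ∈ P`
a lattice order (with meet `wedge` and join `vee`), the simple elements `[1,Δ]`
generating `G` and being finite, `Δ⁻¹PΔ = P`, a finite norm on positive elements,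
and the infimum and supremum functions `inf`, `sup` characterised by
`Δ^(inf x) ≼ x ≼ Δ^(sup x)` with `inf x` maximal and `sup x` minimal. -/
structure Garside (G : Type*) [Group G] where
  P : Submonoid G
  Δ : G
  purity : ∀ a : G, a ∈ P → a⁻¹ ∈ P → a = 1
  delta_mem : Δ ∈ P
  wedge : G → G → G
  vee : G → G → G
  wedge_le_left : ∀ a b : G, (wedge a b)⁻¹ * a ∈ P
  wedge_le_right : ∀ a b : G, (wedge a b)⁻¹ * b ∈ P
  le_wedge : ∀ a b c : G, c⁻¹ * a ∈ P → c⁻¹ * b ∈ P → c⁻¹ * wedge a b ∈ P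
  le_vee_left : ∀ a b : G, a⁻¹ * vee a b ∈ P
  le_vee_right : ∀ a b : G, b⁻¹ * vee a b ∈ P
  vee_le : ∀ a b c : G, a⁻¹ * c ∈ P → b⁻¹ * c ∈ P → (vee a b)⁻¹ * c ∈ P
  simples_generate : Subgroup.closure {a : G | a ∈ P ∧ a⁻¹ * Δ ∈ P} = (⊤ : Subgroup G)
  conj_pos : ∀ a : G, a ∈ P → Δ⁻¹ * a * Δ ∈ P
  norm : G → ℕ
  norm_exists : ∀ x : G, x ∈ P → x ≠ 1 →
    ∃ l : List G, (∀ s ∈ l, s ∈ P ∧ s ≠ 1) ∧ l.prod = x ∧ l.length = norm x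
  norm_max : ∀ x : G, x ∈ P → x ≠ 1 →
    ∀ l : List G, (∀ s ∈ l, s ∈ P ∧ s ≠ 1) → l.prod = x → l.length ≤ norm x
  simples_finite : Set.Finite {a : G | a ∈ P ∧ a⁻¹ * Δ ∈ P}
  inf : G → ℤ
  sup : G → ℤ
  inf_le : ∀ x : G, (Δ ^ inf x)⁻¹ * x ∈ P
  inf_max : ∀ (x : G) (p : ℤ), (Δ ^ p)⁻¹ * x ∈ P → p ≤ inf x
  le_sup : ∀ x : G, x⁻¹ * Δ ^ sup x ∈ P
  sup_min : ∀ (x : G) (q : ℤ), x⁻¹ * Δ ^ q ∈ P → sup x ≤ q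

namespace Garside

variable {G : Type*} [Group G]

/-- The prefix order `a ≼ b`. -/
def le (S : Garside G) (a b : G) : Prop := a⁻¹ * b ∈ S.P

/-- The canonical length `ℓ(x) = sup(x) - inf(x)`. -/
def len (S : Garside G) (x : G) : ℤ := S.sup x - S.inf x

/-- The initial factor `ι(x) = (x Δ^(-inf x)) ∧ Δ`. -/
def iota (S : Garside G) (x : G) : G := S.wedge (x * S.Δ ^ (-S.inf x)) S.Δ

/-- The preferred prefix `𝔭(x) = ι(x) ∧ ι(x⁻¹)`. -/
def pp (S : Garside G) (x : G) : G := S.wedge (S.iota x) (S.iota x⁻¹)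

/-- Cyclic sliding `𝔰(x) = 𝔭(x)⁻¹ x 𝔭(x)`. -/
def sl (S : Garside G) (x : G) : G := (S.pp x)⁻¹ * x * S.pp x

/-- The final factor `φ(x) = (Δ^(sup x - 1) ∧ x)⁻¹ x`. -/
def phi (S : Garside G) (x : G) : G := (S.wedge (S.Δ ^ (S.sup x - 1)) x)⁻¹ * x

/-- Conjugation by `Δ`: `τ(x) = Δ⁻¹ x Δ`. -/
def tau (S : Garside G) (x : G) : G := S.Δ⁻¹ * x * S.Δ

/-- Cycling `c(x) = ι(x)⁻¹ x ι(x)`. -/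
def cyc (S : Garside G) (x : G) : G := (S.iota x)⁻¹ * x * S.iota x

/-- Decycling `d(x) = φ(x) x φ(x)⁻¹`. -/
def dec (S : Garside G) (x : G) : G := S.phi x * x * (S.phi x)⁻¹

/-- The transport `α^{(1)} = 𝔭(x)⁻¹ α 𝔭(x^α)` of `α` at `x`. -/
def transport (S : Garside G) (x α : G) : G := (S.pp x)⁻¹ * α * S.pp (α⁻¹ * x * α)

/-- The iterated transport: `itTransport x i α = α^{(i)}`, the transport of `α^{(i-1)}`
at `𝔰^{i-1}(x)`, with `α^{(0)} = α`. -/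
def itTransport (S : Garside G) (x : G) : ℕ → G → G
  | 0, α => α
  | i + 1, α => S.transport ((S.sl)^[i] x) (S.itTransport x i α)

/-- `𝔓_i(x) = 𝔭(x) 𝔭(𝔰(x)) ⋯ 𝔭(𝔰^{i-1}(x))`, with `𝔓₀(x) = 1`. -/
def PP (S : Garside G) (x : G) : ℕ → G
  | 0 => 1
  | i + 1 => S.PP x i * S.pp ((S.sl)^[i] x)

/-- The summit set `SS(x)`. -/
def SS (S : Garside G) (x : G) : Set G :=
  {y | IsConj x y ∧ ∀ z : G, IsConj x z → S.inf z ≤ S.inf y}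

/-- The super summit set `SSS(x)`. -/
def SSS (S : Garside G) (x : G) : Set G :=
  {y | IsConj x y ∧ (∀ z : G, IsConj x z → S.inf z ≤ S.inf y) ∧
       (∀ z : G, IsConj x z → S.sup y ≤ S.sup z)}

/-- The ultra summit set `USS(x)`. -/
def USS (S : Garside G) (x : G) : Set G :=
  {y | y ∈ S.SSS x ∧ ∃ m : ℕ, 1 ≤ m ∧ (S.cyc)^[m] y = y}

/-- The reduced super summit set `RSSS(x)`. -/
def RSSS (S : Garside G) (x : G) : Set G :=
  {y | IsConj x y ∧ (∃ m : ℕ, 1 ≤ m ∧ (S.cyc)^[m] y = y) ∧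
       (∃ n : ℕ, 1 ≤ n ∧ (S.dec)^[n] y = y)}

/-- The set of sliding circuits `SC(x)`. -/
def SC (S : Garside G) (x : G) : Set G :=
  {y | IsConj x y ∧ ∃ m : ℕ, 1 ≤ m ∧ (S.sl)^[m] y = y}

end Garside

namespace Garside

variable {G : Type*} [Group G] (S : Garside G)

/-! ### Basic order lemmas -/

lemma pLe_refl (a : G) : S.le a a := by
  have h : a⁻¹ * a = 1 := by group
  unfold Garside.le; rw [h]; exact S.P.one_mem

lemma pLe_trans {a b c : G} (h1 : S.le a b) (h2 : S.le b c) : S.le a c := by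
  have h : (a⁻¹ * b) * (b⁻¹ * c) = a⁻¹ * c := by group
  unfold Garside.le at *; rw [← h]; exact S.P.mul_mem h1 h2

lemma pLe_antisymm {a b : G} (h1 : S.le a b) (h2 : S.le b a) : a = b := by
  have h : (a⁻¹ * b)⁻¹ = b⁻¹ * a := by group
  have h0 := S.purity (a⁻¹ * b) h1 (by rw [h]; exact h2)
  exact inv_mul_eq_one.mp h0

lemma le_one_iff {a : G} : S.le 1 a ↔ a ∈ S.P := by
  unfold Garside.le; rw [inv_one, one_mul]

lemma le_congr {a b c d : G} (h : a⁻¹ * b = c⁻¹ * d) : S.le a b ↔ S.le c d := by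
  unfold Garside.le; rw [h]

lemma le_wedge'' {a b c : G} (h1 : S.le c a) (h2 : S.le c b) : S.le c (S.wedge a b) :=
  S.le_wedge a b c h1 h2

lemma wedge_le_left' (a b : G) : S.le (S.wedge a b) a := S.wedge_le_left a b

lemma wedge_le_right' (a b : G) : S.le (S.wedge a b) b := S.wedge_le_right a b

lemma wedge_mem {a b : G} (ha : a ∈ S.P) (hb : b ∈ S.P) : S.wedge a b ∈ S.P := by
  rw [← S.le_one_iff]
  exact S.le_wedge'' ((S.le_one_iff).2 ha) ((S.le_one_iff).2 hb)

lemma dpow_mem {k : ℤ} (hk : 0 ≤ k) : S.Δ ^ k ∈ S.P := by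
  obtain ⟨n, rfl⟩ := Int.eq_ofNat_of_zero_le hk
  rw [zpow_natCast]
  exact pow_mem S.delta_mem n

lemma dle_of_le {a b : ℤ} (h : a ≤ b) : S.le (S.Δ ^ a) (S.Δ ^ b) := by
  have heq : (S.Δ ^ a)⁻¹ * S.Δ ^ b = S.Δ ^ (b - a) := by
    rw [← zpow_neg, ← zpow_add]; ring_nf
  unfold Garside.le; rw [heq]; exact S.dpow_mem (by omega)

/-! ### Lemmas using the central power -/

section Central

variable (e : ℕ) (he : 1 ≤ e) (hce : ∀ g : G, g * S.Δ ^ e = S.Δ ^ e * g)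

include hce in
lemma central_zpow (k : ℤ) (g : G) : g * S.Δ ^ ((e : ℤ) * k) = S.Δ ^ ((e : ℤ) * k) * g := by
  have h1 : S.Δ ^ ((e : ℤ) * k) = (S.Δ ^ (e : ℕ)) ^ k := by
    rw [← zpow_natCast S.Δ e, ← zpow_mul]
  have hcomm : Commute g (S.Δ ^ e) := hce g
  rw [h1]
  exact hcomm.zpow_right k

include hce in
lemma conj_central (k : ℤ) (g : G) :
    (S.Δ ^ ((e : ℤ) * k))⁻¹ * g * S.Δ ^ ((e : ℤ) * k) = g := by
  have h := (S.central_zpow e hce k g).symm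
  rw [mul_assoc, ← h, inv_mul_cancel_left]

include he hce in
lemma tau_mem (k : ℤ) {a : G} (ha : a ∈ S.P) : (S.Δ ^ k)⁻¹ * a * S.Δ ^ k ∈ S.P := by
  -- first for natural number exponents
  have hnn : ∀ (m : ℕ) {b : G}, b ∈ S.P → (S.Δ ^ (m : ℤ))⁻¹ * b * S.Δ ^ (m : ℤ) ∈ S.P := by
    intro m
    induction m with
    | zero => intro b hb; simpa using hb
    | succ n ih =>
      intro b hb
      have heq : (S.Δ ^ ((n : ℤ) + 1))⁻¹ * b * S.Δ ^ ((n : ℤ) + 1)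
          = S.Δ⁻¹ * ((S.Δ ^ (n : ℤ))⁻¹ * b * S.Δ ^ (n : ℤ)) * S.Δ := by
        rw [zpow_add_one]; group
      push_cast
      rw [heq]
      exact S.conj_pos _ (ih hb)
  have hnn' : ∀ (m : ℤ), 0 ≤ m → ∀ {b : G}, b ∈ S.P → (S.Δ ^ m)⁻¹ * b * S.Δ ^ m ∈ S.P := by
    intro m hm b hb
    obtain ⟨n, rfl⟩ := Int.eq_ofNat_of_zero_le hm
    exact hnn n hb
  -- general case
  have hn0 : (0 : ℤ) ≤ ((-k).toNat : ℤ) := by positivity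
  have hkn : -k ≤ ((-k).toNat : ℤ) := Int.self_le_toNat (-k)
  have he' : (1 : ℤ) ≤ (e : ℤ) := by exact_mod_cast he
  have hen : ((-k).toNat : ℤ) ≤ (e : ℤ) * ((-k).toNat : ℤ) := by nlinarith
  have h0 : 0 ≤ k + (e : ℤ) * ((-k).toNat : ℤ) := by omega
  have heq : (S.Δ ^ (k + (e : ℤ) * ((-k).toNat : ℤ)))⁻¹ * a * S.Δ ^ (k + (e : ℤ) * ((-k).toNat : ℤ))
      = (S.Δ ^ ((e : ℤ) * ((-k).toNat : ℤ)))⁻¹ * ((S.Δ ^ k)⁻¹ * a * S.Δ ^ k) * S.Δ ^ ((e : ℤ) * ((-k).toNat : ℤ)) := by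
    rw [zpow_add]; group
  have hm := hnn' _ h0 ha
  rw [heq, S.conj_central e hce _ _] at hm
  exact hm

include he hce in
lemma tau_mem_iff (k : ℤ) {a : G} : (S.Δ ^ k)⁻¹ * a * S.Δ ^ k ∈ S.P ↔ a ∈ S.P := by
  constructor
  · intro h
    have h2 := S.tau_mem e he hce (-k) h
    have heq : (S.Δ ^ (-k))⁻¹ * ((S.Δ ^ k)⁻¹ * a * S.Δ ^ k) * S.Δ ^ (-k) = a := by group
    rwa [heq] at h2
  · exact S.tau_mem e he hce k

include he hce in
lemma le_rmul {a b : G} (k : ℤ) : S.le (a * S.Δ ^ k) (b * S.Δ ^ k) ↔ S.le a b := by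
  have heq : (a * S.Δ ^ k)⁻¹ * (b * S.Δ ^ k) = (S.Δ ^ k)⁻¹ * (a⁻¹ * b) * S.Δ ^ k := by group
  unfold Garside.le; rw [heq]; exact S.tau_mem_iff e he hce k

lemma mul_wedge (c a b : G) : c * S.wedge a b = S.wedge (c * a) (c * b) := by
  apply S.pLe_antisymm
  · apply S.le_wedge''
    · exact (S.le_congr (by group)).2 (S.wedge_le_left' a b)
    · exact (S.le_congr (by group)).2 (S.wedge_le_right' a b)
  · have h1 : S.le (c⁻¹ * S.wedge (c*a) (c*b)) a :=
      (S.le_congr (by group)).2 (S.wedge_le_left' (c*a) (c*b))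
    have h2 : S.le (c⁻¹ * S.wedge (c*a) (c*b)) b :=
      (S.le_congr (by group)).2 (S.wedge_le_right' (c*a) (c*b))
    have h3 := S.le_wedge'' h1 h2
    exact (S.le_congr (by group)).2 h3

include he hce in
lemma wedge_rmul (a b : G) (k : ℤ) :
    S.wedge a b * S.Δ ^ k = S.wedge (a * S.Δ ^ k) (b * S.Δ ^ k) := by
  apply S.pLe_antisymm
  · apply S.le_wedge''
    · exact (S.le_rmul e he hce k).2 (S.wedge_le_left' a b)
    · exact (S.le_rmul e he hce k).2 (S.wedge_le_right' a b)
  · have h1 : S.le (S.wedge (a * S.Δ^k) (b * S.Δ^k) * S.Δ^(-k)) a :=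
      (S.le_congr (by group)).2
        ((S.le_rmul e he hce (-k)).2 (S.wedge_le_left' (a * S.Δ^k) (b * S.Δ^k)))
    have h2 : S.le (S.wedge (a * S.Δ^k) (b * S.Δ^k) * S.Δ^(-k)) b :=
      (S.le_congr (by group)).2
        ((S.le_rmul e he hce (-k)).2 (S.wedge_le_right' (a * S.Δ^k) (b * S.Δ^k)))
    have h3 := S.le_wedge'' h1 h2
    have h4 := (S.le_rmul e he hce k).2 h3
    exact (S.le_congr (by group)).2 h4

end Central

/-! ### inf and sup -/

lemma inf_le' (x : G) : S.le (S.Δ ^ S.inf x) x := S.inf_le x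

lemma le_sup' (x : G) : S.le x (S.Δ ^ S.sup x) := S.le_sup x

lemma inf_ge_iff {p : ℤ} {x : G} : p ≤ S.inf x ↔ S.le (S.Δ ^ p) x := by
  constructor
  · intro h; exact S.pLe_trans (S.dle_of_le h) (S.inf_le' x)
  · intro h; exact S.inf_max x p h

lemma sup_le_iff {q : ℤ} {x : G} : S.sup x ≤ q ↔ S.le x (S.Δ ^ q) := by
  constructor
  · intro h; exact S.pLe_trans (S.le_sup' x) (S.dle_of_le h)
  · intro h; exact S.sup_min x q h

lemma dpow_ne_one (hΔ : S.Δ ≠ 1) {n : ℤ} (hn : 0 < n) : S.Δ ^ n ≠ 1 := by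
  intro h
  apply hΔ
  have h1 : S.Δ ^ (n - 1) = S.Δ⁻¹ := by
    rw [zpow_sub, h, zpow_one]; group
  have h2 : S.Δ⁻¹ ∈ S.P := h1 ▸ S.dpow_mem (by omega)
  exact S.purity S.Δ S.delta_mem h2

lemma le_dpow_iff (hΔ : S.Δ ≠ 1) {a b : ℤ} : S.le (S.Δ ^ a) (S.Δ ^ b) ↔ a ≤ b := by
  constructor
  · intro h
    by_contra hab
    push_neg at hab
    have h1 : S.Δ ^ (b - a) ∈ S.P := by
      have heq : (S.Δ ^ a)⁻¹ * S.Δ ^ b = S.Δ ^ (b - a) := by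
        rw [← zpow_neg, ← zpow_add]; ring_nf
      rw [← heq]; exact h
    have h2 : (S.Δ ^ (b - a))⁻¹ ∈ S.P := by
      rw [← zpow_neg]; exact S.dpow_mem (by omega)
    have h3 := S.purity _ h1 h2
    have h4 : S.Δ ^ (a - b) = 1 := by
      rw [← neg_sub b a, zpow_neg, h3]; group
    exact S.dpow_ne_one hΔ (by omega : (0:ℤ) < a - b) h4
  · exact S.dle_of_le

lemma inf_le_sup_of_le (hΔ : S.Δ ≠ 1) {a b : G} (h : S.le a b) : S.inf a ≤ S.sup b := by
  have h1 : S.le (S.Δ ^ S.inf a) (S.Δ ^ S.sup b) :=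
    S.pLe_trans (S.inf_le' a) (S.pLe_trans h (S.le_sup' b))
  exact (S.le_dpow_iff hΔ).1 h1

lemma mem_P_of_inf {a : G} (h : 0 ≤ S.inf a) : a ∈ S.P := by
  rw [← S.le_one_iff]
  have h1 : S.le (S.Δ ^ (0:ℤ)) a := S.inf_ge_iff.1 h
  have heq : ((S.Δ ^ (0:ℤ))⁻¹ * a) = (1:G)⁻¹ * a := by rw [zpow_zero]
  exact (S.le_congr heq.symm).2 h1

lemma sup_one_le : S.sup (1 : G) ≤ 0 := by
  rw [S.sup_le_iff]
  have heq : ((1:G)⁻¹ * S.Δ ^ (0:ℤ)) = (1:G)⁻¹ * 1 := by rw [zpow_zero]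
  exact (S.le_congr heq).2 (S.pLe_refl 1)

lemma conj_pow_eq (g x : G) : ∀ k : ℕ, (g⁻¹ * x * g) ^ k = g⁻¹ * x ^ k * g := by
  intro k
  induction k with
  | zero => simp
  | succ n ih => rw [pow_succ, pow_succ, ih]; group

lemma inf_inv_aux (e : ℕ) (he : 1 ≤ e) (hce : ∀ g : G, g * S.Δ ^ e = S.Δ ^ e * g)
    {x : G} {q : ℤ} : S.le x (S.Δ ^ q) ↔ S.le (S.Δ ^ (-q)) x⁻¹ := by
  unfold Garside.le
  have heq : (S.Δ ^ q)⁻¹ * (S.Δ ^ q * x⁻¹) * S.Δ ^ q = x⁻¹ * S.Δ ^ q := by group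
  have h1 : x⁻¹ * S.Δ ^ q ∈ S.P ↔ S.Δ ^ q * x⁻¹ ∈ S.P := by
    rw [← heq]; exact S.tau_mem_iff e he hce q
  have heq2 : (S.Δ ^ (-q))⁻¹ * x⁻¹ = S.Δ ^ q * x⁻¹ := by
    rw [zpow_neg, inv_inv]
  rw [heq2, h1]

section Central2

variable (e : ℕ) (he : 1 ≤ e) (hce : ∀ g : G, g * S.Δ ^ e = S.Δ ^ e * g)

include he hce in
lemma inf_inv (x : G) : S.inf x⁻¹ = - S.sup x := by
  apply le_antisymm
  · have h1 : S.le (S.Δ ^ S.inf x⁻¹) x⁻¹ := S.inf_le' x⁻¹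
    have h2 : S.le x (S.Δ ^ (- S.inf x⁻¹)) := by
      rw [S.inf_inv_aux e he hce, neg_neg]; exact h1
    have := S.sup_le_iff.1 (le_refl (S.sup x))
    have h3 : S.sup x ≤ - S.inf x⁻¹ := S.sup_le_iff.2 h2
    omega
  · rw [S.inf_ge_iff]
    exact (S.inf_inv_aux e he hce).1 (S.le_sup' x)

include he hce in
lemma sup_inv (x : G) : S.sup x⁻¹ = - S.inf x := by
  have h := S.inf_inv e he hce x⁻¹
  rw [inv_inv] at h
  omega

include he hce in
lemma inf_rmul (g : G) (k : ℤ) : S.inf (g * S.Δ ^ k) = S.inf g + k := by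
  apply le_antisymm
  · have h1 := S.inf_le' (g * S.Δ ^ k)
    have h3 := (S.le_rmul e he hce (-k)).2 h1
    have h2 : S.le (S.Δ ^ (S.inf (g * S.Δ ^ k) - k)) g := by
      refine (S.le_congr ?_).2 h3
      have : S.Δ ^ (S.inf (g * S.Δ ^ k) - k) = S.Δ ^ (S.inf (g * S.Δ ^ k)) * S.Δ ^ (-k) := by
        rw [← zpow_add]; ring_nf
      rw [this]; group
    have h4 := S.inf_ge_iff.2 h2
    omega
  · rw [S.inf_ge_iff]
    have h1 := (S.le_rmul e he hce k).2 (S.inf_le' g)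
    refine (S.le_congr ?_).2 h1
    rw [zpow_add]

include he hce in
lemma sup_mul_le (a b : G) : S.sup (a * b) ≤ S.sup a + S.sup b := by
  rw [S.sup_le_iff]
  have h1 : S.le (a * b) (a * S.Δ ^ S.sup b) :=
    (S.le_congr (by group)).2 (S.le_sup' b)
  have h2 : S.le (a * S.Δ ^ S.sup b) (S.Δ ^ (S.sup a + S.sup b)) := by
    have h3 := (S.le_rmul e he hce (S.sup b)).2 (S.le_sup' a)
    refine (S.le_congr ?_).2 h3
    rw [zpow_add]
  exact S.pLe_trans h1 h2

include he hce in
lemma le_pow_of_dle {p : ℤ} {y : G} (hp : S.le (S.Δ ^ p) y) :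
    ∀ k : ℕ, S.le (S.Δ ^ ((k : ℤ) * p)) (y ^ k) := by
  intro k
  induction k with
  | zero =>
    have h0 : ((0 : ℕ) : ℤ) * p = 0 := by simp
    rw [h0, zpow_zero, pow_zero]; exact S.pLe_refl 1
  | succ n ih =>
    have hexp : ((n + 1 : ℕ) : ℤ) * p = (n : ℤ) * p + p := by push_cast; ring
    unfold Garside.le
    have heq : (S.Δ ^ (((n + 1 : ℕ) : ℤ) * p))⁻¹ * y ^ (n + 1)
        = ((S.Δ ^ ((n:ℤ) * p))⁻¹ * ((S.Δ ^ p)⁻¹ * y) * S.Δ ^ ((n:ℤ) * p))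
          * ((S.Δ ^ ((n:ℤ) * p))⁻¹ * y ^ n) := by
      rw [hexp, pow_succ']
      generalize y ^ n = Y
      rw [zpow_add]; group
    rw [heq]
    exact S.P.mul_mem (S.tau_mem e he hce _ hp) ih

include he hce in
lemma sup_pow_le (y : G) : ∀ k : ℕ, S.sup (y ^ k) ≤ (k : ℤ) * S.sup y := by
  intro k
  induction k with
  | zero => simpa using S.sup_one_le
  | succ n ih =>
    have h1 : S.sup (y ^ (n+1)) ≤ S.sup y + S.sup (y ^ n) := by
      rw [pow_succ']; exact S.sup_mul_le e he hce y (y ^ n)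
    have hexp : ((n + 1 : ℕ) : ℤ) * S.sup y = (n : ℤ) * S.sup y + S.sup y := by push_cast; ring
    omega

include he hce in
lemma conj_bound (hΔ : S.Δ ≠ 1) {x y : G} (h : IsConj x y) : S.inf y ≤ S.sup x := by
  obtain ⟨c, hc⟩ := isConj_iff.1 h
  obtain ⟨g, hy⟩ : ∃ g : G, g⁻¹ * x * g = y := ⟨c⁻¹, by rw [← hc]; group⟩
  have hk : ∀ k : ℕ, S.inf g + (k : ℤ) * S.inf y ≤ (k : ℤ) * S.sup x + S.sup g := by
    intro k
    have h1 : S.le (S.Δ ^ ((k:ℤ) * S.inf y)) (y ^ k) :=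
      S.le_pow_of_dle e he hce (S.inf_le' y) k
    have h2 : S.le (g * S.Δ ^ ((k:ℤ) * S.inf y)) (g * y ^ k) :=
      (S.le_congr (by group)).2 h1
    have h3 : g * y ^ k = x ^ k * g := by
      rw [← hy, conj_pow_eq]; group
    rw [h3] at h2
    have h4 := S.inf_le_sup_of_le hΔ h2
    rw [S.inf_rmul e he hce] at h4
    have h5 : S.sup (x ^ k * g) ≤ S.sup (x ^ k) + S.sup g := S.sup_mul_le e he hce _ g
    have h6 : S.sup (x ^ k) ≤ (k : ℤ) * S.sup x := S.sup_pow_le e he hce x k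
    omega
  by_contra hcon
  push_neg at hcon
  set k : ℕ := (S.sup g - S.inf g).toNat + 1 with hkdef
  have h1 := hk k
  have hk1 : S.sup g - S.inf g < (k : ℤ) := by
    have := Int.self_le_toNat (S.sup g - S.inf g)
    rw [hkdef]; push_cast; omega
  have hd : 1 ≤ S.inf y - S.sup x := by omega
  have hk0 : (0 : ℤ) ≤ (k : ℤ) := by positivity
  nlinarith

include he hce in
lemma positivize (z g : G) : ∃ c : G, c ∈ S.P ∧ c⁻¹ * z * c = g⁻¹ * z * g := by
  set k : ℕ := (- S.inf g).toNat with hk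
  refine ⟨g * S.Δ ^ ((e : ℤ) * (k : ℤ)), ?_, ?_⟩
  · apply S.mem_P_of_inf
    rw [S.inf_rmul e he hce]
    have h1 : - S.inf g ≤ (k : ℤ) := Int.self_le_toNat _
    have h2 : (1 : ℤ) ≤ (e : ℤ) := by exact_mod_cast he
    have h3 : (0 : ℤ) ≤ (k : ℤ) := by positivity
    nlinarith
  · have heq : (g * S.Δ ^ ((e : ℤ) * (k:ℤ)))⁻¹ * z * (g * S.Δ ^ ((e : ℤ) * (k:ℤ)))
        = (S.Δ ^ ((e : ℤ) * (k:ℤ)))⁻¹ * (g⁻¹ * z * g) * S.Δ ^ ((e : ℤ) * (k:ℤ)) := by group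
    rw [heq, S.conj_central e hce]

end Central2

/-! ### Norms and minimal elements -/

lemma norm_pos {a : G} (ha : a ∈ S.P) (h1 : a ≠ 1) : 1 ≤ S.norm a := by
  obtain ⟨l, hl, hp, hlen⟩ := S.norm_exists a ha h1
  rcases l with _ | ⟨b, l'⟩
  · simp at hp; exact absurd hp.symm h1
  · simp at hlen; omega

lemma norm_lt {a b : G} (ha : a ∈ S.P) (ha1 : a ≠ 1) (hb : b ∈ S.P) (hb1 : b ≠ 1)
    (hab : S.le a b) (hne : a ≠ b) : S.norm a < S.norm b := by
  set r : G := a⁻¹ * b with hr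
  have hrP : r ∈ S.P := hab
  have hr1 : r ≠ 1 := fun h => hne (inv_mul_eq_one.mp (hr ▸ h))
  obtain ⟨l1, hl1, hp1, hlen1⟩ := S.norm_exists a ha ha1
  obtain ⟨l2, hl2, hp2, hlen2⟩ := S.norm_exists r hrP hr1
  have hprod : (l1 ++ l2).prod = b := by
    rw [List.prod_append, hp1, hp2, hr]; group
  have hmem : ∀ s ∈ l1 ++ l2, s ∈ S.P ∧ s ≠ 1 := by
    intro s hs
    rcases List.mem_append.1 hs with h | h
    · exact hl1 s h
    · exact hl2 s h
  have hle := S.norm_max b hb hb1 (l1 ++ l2) hmem hprod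
  rw [List.length_append, hlen1, hlen2] at hle
  have := S.norm_pos hrP hr1
  omega

lemma exists_min {D : Set G} (hne : D.Nonempty) (hP : ∀ a ∈ D, a ∈ S.P)
    (hW : ∀ a ∈ D, ∀ b ∈ D, S.wedge a b ∈ D) : ∃ m ∈ D, ∀ f ∈ D, S.le m f := by
  by_cases h1 : (1 : G) ∈ D
  · exact ⟨1, h1, fun f hf => (S.le_one_iff).2 (hP f hf)⟩
  · have hTne : (S.norm '' D).Nonempty := hne.image _
    obtain ⟨d, hdD, hdn⟩ := Nat.sInf_mem hTne
    refine ⟨d, hdD, ?_⟩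
    intro f hf
    have hwD : S.wedge d f ∈ D := hW d hdD f hf
    by_cases heq : S.wedge d f = d
    · have h2 := S.wedge_le_right' d f
      rwa [heq] at h2
    · exfalso
      have hd1 : d ≠ 1 := fun h => h1 (h ▸ hdD)
      have hw1 : S.wedge d f ≠ 1 := fun h => h1 (h ▸ hwD)
      have hlt := S.norm_lt (hP _ hwD) hw1 (hP d hdD) hd1 (S.wedge_le_left' d f) heq
      have hge : sInf (S.norm '' D) ≤ S.norm (S.wedge d f) :=
        Nat.sInf_le ⟨S.wedge d f, hwD, rfl⟩
      omega

/-! ### The key lemma: the minimal conjugator raising inf does not raise sup -/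

section Key

variable (e : ℕ) (he : 1 ≤ e) (hce : ∀ g : G, g * S.Δ ^ e = S.Δ ^ e * g)

include he hce in
lemma exists_good (z w : G) (hconj : IsConj z w) (p' : ℤ) (hp : p' ≤ S.inf w) :
    ∃ m : G, m ∈ S.P ∧ p' ≤ S.inf (m⁻¹ * z * m) ∧
      S.sup (m⁻¹ * z * m) ≤ max (S.sup z) p' := by
  classical
  obtain ⟨c0, hc0⟩ := isConj_iff.1 hconj
  obtain ⟨c, hcP, hcconj⟩ := S.positivize e he hce z c0⁻¹
  have hcw : c⁻¹ * z * c = w := by rw [hcconj, ← hc0]; group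
  set D : Set G := {f : G | f ∈ S.P ∧ S.le (f * S.Δ ^ p') (z * f)} with hD
  -- c is in D
  have hcD : c ∈ D := by
    refine ⟨hcP, ?_⟩
    have h1 : S.le (S.Δ ^ p') (c⁻¹ * z * c) := by rw [hcw]; exact S.inf_ge_iff.1 hp
    exact (S.le_congr (by group)).2 h1
  -- D is closed under meets
  have hWD : ∀ a ∈ D, ∀ b ∈ D, S.wedge a b ∈ D := by
    intro a ha b hb
    refine ⟨S.wedge_mem ha.1 hb.1, ?_⟩
    have hza : S.le (S.wedge a b * S.Δ ^ p') (z * a) :=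
      S.pLe_trans ((S.le_rmul e he hce p').2 (S.wedge_le_left' a b)) ha.2
    have hzb : S.le (S.wedge a b * S.Δ ^ p') (z * b) :=
      S.pLe_trans ((S.le_rmul e he hce p').2 (S.wedge_le_right' a b)) hb.2
    have h3 := S.le_wedge'' hza hzb
    rwa [← S.mul_wedge z a b] at h3
  obtain ⟨m, hmD, hmmin⟩ := S.exists_min ⟨c, hcD⟩ (fun a ha => ha.1) hWD
  set Q : ℤ := max (S.sup z) p' with hQ
  -- the trick element
  set n : G := S.wedge m (z⁻¹ * m * S.Δ ^ Q) with hn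
  have hzleQ : S.le z (m * S.Δ ^ Q) := by
    have h1 : S.le z (S.Δ ^ Q) :=
      S.pLe_trans (S.le_sup' z) (S.dle_of_le (le_max_left _ _))
    have h2 : S.le (S.Δ ^ Q) (m * S.Δ ^ Q) := by
      have := (S.le_rmul e he hce Q).2 ((S.le_one_iff).2 hmD.1)
      simpa using this
    exact S.pLe_trans h1 h2
  have hnD : n ∈ D := by
    constructor
    · rw [← S.le_one_iff]
      apply S.le_wedge''
      · exact (S.le_one_iff).2 hmD.1
      · exact (S.le_congr (by group)).2 hzleQ
    · -- S.le (n * Δ^p') (z * n)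
      have h1 : S.le (n * S.Δ ^ p') (m * S.Δ ^ p') :=
        (S.le_rmul e he hce p').2 (S.wedge_le_left' _ _)
      have h3 : S.le (n * S.Δ ^ p') (z * m) := S.pLe_trans h1 hmD.2
      have h4 : S.le (m * S.Δ ^ p') (m * S.Δ ^ Q) :=
        (S.le_congr (by group; rfl)).2 (S.dle_of_le (le_max_right (S.sup z) p'))
      have h5 : S.le (n * S.Δ ^ p') (m * S.Δ ^ Q) := S.pLe_trans h1 h4
      have h6 : S.le (n * S.Δ ^ p') (z * (z⁻¹ * m * S.Δ ^ Q)) :=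
        (S.le_congr (by group)).2 h5
      have h7 := S.le_wedge'' h3 h6
      rwa [← S.mul_wedge z m (z⁻¹ * m * S.Δ ^ Q)] at h7
  have hmn : S.le m n := hmmin n hnD
  have hfin : S.le m (z⁻¹ * m * S.Δ ^ Q) :=
    S.pLe_trans hmn (S.wedge_le_right' m (z⁻¹ * m * S.Δ ^ Q))
  refine ⟨m, hmD.1, ?_, ?_⟩
  · rw [S.inf_ge_iff]
    exact (S.le_congr (by group)).2 hmD.2
  · rw [S.sup_le_iff]
    exact (S.le_congr (by group)).2 hfin

include he hce in
lemma exists_good_sup (z w : G) (hconj : IsConj z w) (q' : ℤ) (hq : S.sup w ≤ q') :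
    ∃ m : G, m ∈ S.P ∧ S.sup (m⁻¹ * z * m) ≤ q' ∧
      min (S.inf z) q' ≤ S.inf (m⁻¹ * z * m) := by
  have hconj' : IsConj z⁻¹ w⁻¹ := by
    obtain ⟨c, hc⟩ := isConj_iff.1 hconj
    exact isConj_iff.2 ⟨c, by rw [← hc]; group⟩
  have hp : -q' ≤ S.inf w⁻¹ := by rw [S.inf_inv e he hce]; omega
  obtain ⟨m, hmP, h1, h2⟩ := S.exists_good e he hce z⁻¹ w⁻¹ hconj' (-q') hp
  have heq : m⁻¹ * z⁻¹ * m = (m⁻¹ * z * m)⁻¹ := by group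
  rw [heq] at h1 h2
  rw [S.inf_inv e he hce] at h1
  rw [S.sup_inv e he hce] at h2
  rw [S.sup_inv e he hce] at h2
  refine ⟨m, hmP, by omega, ?_⟩
  rcases le_or_gt (S.inf z) q' with h | h
  · have : max (- S.inf z) (-q') = - S.inf z := by omega
    omega
  · omega

end Key

end Garside

open Garside in
theorem statement14 {G : Type*} [Group G] (S : Garside G) (x : G)
    (hc : ∃ e : ℕ, 1 ≤ e ∧ ∀ g : G, g * S.Δ ^ e = S.Δ ^ e * g) :
    ∃! ρ : G, ρ ∈ S.P ∧ ρ⁻¹ * x * ρ ∈ S.SSS x ∧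
      ∀ α : G, α ∈ S.P → α⁻¹ * x * α ∈ S.SSS x → S.le ρ α := by
  classical
  obtain ⟨e, he, hce⟩ := hc
  by_cases hΔ : S.Δ = 1
  · -- degenerate case: the group is trivial
    have hsub : {a : G | a ∈ S.P ∧ a⁻¹ * S.Δ ∈ S.P} ⊆ {(1 : G)} := by
      intro a ha
      obtain ⟨h1, h2⟩ := ha
      rw [hΔ, mul_one] at h2
      exact Set.mem_singleton_iff.2 (S.purity a h1 h2)
    have htop : (⊤ : Subgroup G) ≤ Subgroup.closure {(1 : G)} :=
      S.simples_generate ▸ Subgroup.closure_mono hsub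
    have hall : ∀ g : G, g = 1 := by
      intro g
      have hg := htop (Subgroup.mem_top g)
      rwa [Subgroup.closure_singleton_one, Subgroup.mem_bot] at hg
    refine ⟨1, ⟨S.P.one_mem, ?_, fun α hα _ => (S.le_one_iff).2 hα⟩, fun yy hyy => hall yy⟩
    have hx1 : (1 : G)⁻¹ * x * 1 = x := by group
    rw [hx1]
    exact ⟨IsConj.refl x,
      fun z _ => le_of_eq (congrArg S.inf ((hall z).trans (hall x).symm)),
      fun z _ => le_of_eq (congrArg S.sup ((hall x).trans (hall z).symm))⟩
  · -- main case
    have hxx : IsConj x x := IsConj.refl x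
    obtain ⟨pstar, ⟨yp, hypc, hypinf⟩, hpmax⟩ :=
      Int.exists_greatest_of_bdd (P := fun p => ∃ y, IsConj x y ∧ S.inf y = p)
        ⟨S.sup x, by rintro p ⟨y, hyc, rfl⟩; exact S.conj_bound e he hce hΔ hyc⟩
        ⟨S.inf x, x, hxx, rfl⟩
    obtain ⟨qstar, ⟨yq, hyqc, hyqsup⟩, hqmin⟩ :=
      Int.exists_least_of_bdd (P := fun q => ∃ y, IsConj x y ∧ S.sup y = q)
        ⟨S.inf x, by rintro q ⟨y, hyc, rfl⟩; exact S.conj_bound e he hce hΔ hyc.symm⟩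
        ⟨S.sup x, x, hxx, rfl⟩
    have hmaxinf : ∀ y, IsConj x y → S.inf y ≤ pstar := fun y hy => hpmax _ ⟨y, hy, rfl⟩
    have hminsup : ∀ y, IsConj x y → qstar ≤ S.sup y := fun y hy => hqmin _ ⟨y, hy, rfl⟩
    have hpq : pstar ≤ qstar := by
      have h := S.conj_bound e he hce hΔ (hyqc.symm.trans hypc)
      rw [hypinf, hyqsup] at h
      exact h
    -- Phase 1: raise inf to pstar
    obtain ⟨m1, hm1P, h1inf, _⟩ :=
      S.exists_good e he hce x yp hypc pstar (le_of_eq hypinf.symm)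
    set y1 : G := m1⁻¹ * x * m1 with hy1def
    have hy1c : IsConj x y1 := isConj_iff.2 ⟨m1⁻¹, by rw [hy1def]; group⟩
    have hy1inf : S.inf y1 = pstar := le_antisymm (hmaxinf _ hy1c) h1inf
    -- Phase 2: lower sup to qstar
    obtain ⟨m2, hm2P, h2sup, h2inf⟩ :=
      S.exists_good_sup e he hce y1 yq (hy1c.symm.trans hyqc) qstar (le_of_eq hyqsup)
    set y2 : G := m2⁻¹ * y1 * m2 with hy2def
    have hy2c : IsConj x y2 := hy1c.trans (isConj_iff.2 ⟨m2⁻¹, by rw [hy2def]; group⟩)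
    have hy2inf : S.inf y2 = pstar := by
      apply le_antisymm (hmaxinf _ hy2c)
      have : min (S.inf y1) qstar = pstar := by rw [hy1inf]; omega
      omega
    have hy2sup : S.sup y2 = qstar := le_antisymm h2sup (hminsup _ hy2c)
    -- characterisation of the super summit set
    have hSSS : ∀ y : G, IsConj x y → S.inf y = pstar → S.sup y = qstar → y ∈ S.SSS x := by
      intro y hy hyi hys
      exact ⟨hy, fun z hz => by rw [hyi]; exact hmaxinf z hz,
        fun z hz => by rw [hys]; exact hminsup z hz⟩
    have hSSS' : ∀ y : G, y ∈ S.SSS x → S.inf y = pstar ∧ S.sup y = qstar := by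
      intro y hy
      obtain ⟨hyc', hyi, hys⟩ := hy
      constructor
      · exact le_antisymm (hmaxinf y hyc') (by rw [← hypinf]; exact hyi yp hypc)
      · exact le_antisymm (by rw [← hyqsup]; exact hys yq hyqc) (hminsup y hyc')
    -- the set of positive conjugators into the super summit set
    set D : Set G := {α : G | α ∈ S.P ∧ α⁻¹ * x * α ∈ S.SSS x} with hDdef
    have hγ : m1 * m2 ∈ D := by
      refine ⟨S.P.mul_mem hm1P hm2P, ?_⟩
      have heq : (m1 * m2)⁻¹ * x * (m1 * m2) = y2 := by rw [hy2def, hy1def]; group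
      rw [heq]
      exact hSSS y2 hy2c hy2inf hy2sup
    have hWD : ∀ a ∈ D, ∀ b ∈ D, S.wedge a b ∈ D := by
      intro α hα β hβ
      refine ⟨S.wedge_mem hα.1 hβ.1, ?_⟩
      obtain ⟨hαi, hαs⟩ := hSSS' _ hα.2
      obtain ⟨hβi, hβs⟩ := hSSS' _ hβ.2
      have hconjw : IsConj x ((S.wedge α β)⁻¹ * x * S.wedge α β) :=
        isConj_iff.2 ⟨(S.wedge α β)⁻¹, by group⟩
      apply hSSS _ hconjw
      · -- inf of the new conjugate is pstar
        refine le_antisymm (hmaxinf _ hconjw) ?_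
        rw [S.inf_ge_iff]
        have ha' : S.le (α * S.Δ ^ pstar) (x * α) :=
          (S.le_congr (by group)).2 (S.inf_ge_iff.1 (le_of_eq hαi.symm))
        have hb' : S.le (β * S.Δ ^ pstar) (x * β) :=
          (S.le_congr (by group)).2 (S.inf_ge_iff.1 (le_of_eq hβi.symm))
        have h1 : S.le (S.wedge α β * S.Δ ^ pstar) (x * α) :=
          S.pLe_trans ((S.le_rmul e he hce pstar).2 (S.wedge_le_left' α β)) ha'
        have h2 : S.le (S.wedge α β * S.Δ ^ pstar) (x * β) :=
          S.pLe_trans ((S.le_rmul e he hce pstar).2 (S.wedge_le_right' α β)) hb'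
        have h3 := S.le_wedge'' h1 h2
        rw [← S.mul_wedge x α β] at h3
        exact (S.le_congr (by group)).2 h3
      · -- sup of the new conjugate is qstar
        refine le_antisymm ?_ (hminsup _ hconjw)
        rw [S.sup_le_iff]
        have ha' : S.le (x * α) (α * S.Δ ^ qstar) :=
          (S.le_congr (by group)).2 (S.sup_le_iff.1 (le_of_eq hαs))
        have hb' : S.le (x * β) (β * S.Δ ^ qstar) :=
          (S.le_congr (by group)).2 (S.sup_le_iff.1 (le_of_eq hβs))
        have h1 : S.le (x * S.wedge α β) (α * S.Δ ^ qstar) :=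
          S.pLe_trans ((S.le_congr (by group)).2 (S.wedge_le_left' α β)) ha'
        have h2 : S.le (x * S.wedge α β) (β * S.Δ ^ qstar) :=
          S.pLe_trans ((S.le_congr (by group)).2 (S.wedge_le_right' α β)) hb'
        have h3 := S.le_wedge'' h1 h2
        rw [← S.wedge_rmul e he hce α β qstar] at h3
        exact (S.le_congr (by group)).2 h3
    obtain ⟨ρ, hρD, hρmin⟩ := S.exists_min ⟨m1 * m2, hγ⟩ (fun a ha => ha.1) hWD
    refine ⟨ρ, ⟨hρD.1, hρD.2, fun α hαP hαS => hρmin α ⟨hαP, hαS⟩⟩, ?_⟩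
    rintro ρ' ⟨hρ'P, hρ'S, hρ'min⟩
    exact S.pLe_antisymm (hρ'min ρ hρD.1 hρD.2) (hρmin ρ' ⟨hρ'P, hρ'S⟩)

end GarsidePaper
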